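/- Fix real design points x₁ < x₂ < ⋯ < x_n (n ≥ 2) and let C = {θ ∈ ℝⁿ : (θ₂−θ₁)/(x₂−x₁) ≤ (θ₃−θ₂)/(x₃−x₂) ≤ ⋯ ≤ (θ_n−θ_{n−1})/(x_n−x_{n−1})} be the univariate convex regression cone. Let θ̂(y) = P_C(y). For Lebesgue-almost every y ∈ ℝⁿ, the map θ̂ is differentiable at y with divergence D(y) = s + 2, where s = #{k ∈ {1,…,n−2} : (θ̂_{k+2}(y)−θ̂_{k+1}(y))/(x_{k+2}−x_{k+1}) > (θ̂_{k+1}(y)−θ̂_k(y))/(x_{k+1}−x_k)} is the number of strict changes of slope of the fit θ̂(y). -/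

import Mathlib

open Matrix MeasureTheory

/-- The divergence of a map `ℝⁿ → ℝⁿ` at `y`: the trace of its derivative,
`∑ i, ∂fᵢ/∂yᵢ (y)`. -/
noncomputable def divg {n : ℕ} (f : (Fin n → ℝ) → (Fin n → ℝ)) (y : Fin n → ℝ) : ℝ :=
  ∑ i, fderiv ℝ f y (Pi.single i 1) i

namespace CRaux

variable {n : ℕ}

/-- The constraint vector for slope constraint `k`: `aV x k ⬝ᵥ θ = slope_{k+1} - slope_k ≥ 0`. -/
noncomputable def aV (x : Fin n → ℝ) (k : Fin (n - 2)) : Fin n → ℝ :=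
  Pi.single ⟨k.1, by omega⟩ (1 / (x ⟨k.1 + 1, by omega⟩ - x ⟨k.1, by omega⟩))
  + Pi.single ⟨k.1 + 1, by omega⟩
      (-(1 / (x ⟨k.1 + 1, by omega⟩ - x ⟨k.1, by omega⟩)
        + 1 / (x ⟨k.1 + 2, by omega⟩ - x ⟨k.1 + 1, by omega⟩)))
  + Pi.single ⟨k.1 + 2, by omega⟩ (1 / (x ⟨k.1 + 2, by omega⟩ - x ⟨k.1 + 1, by omega⟩))


lemma aV_dot (x : Fin n → ℝ) (k : Fin (n - 2)) (θ : Fin n → ℝ) :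
    aV x k ⬝ᵥ θ =
      (θ ⟨k.1 + 2, by omega⟩ - θ ⟨k.1 + 1, by omega⟩)
          / (x ⟨k.1 + 2, by omega⟩ - x ⟨k.1 + 1, by omega⟩)
        - (θ ⟨k.1 + 1, by omega⟩ - θ ⟨k.1, by omega⟩)
          / (x ⟨k.1 + 1, by omega⟩ - x ⟨k.1, by omega⟩) := by
  simp [aV, add_dotProduct, single_dotProduct]
  ring



lemma sum_dot {ι : Type*} (s : Finset ι) (f : ι → Fin n → ℝ) (v : Fin n → ℝ) :
    (∑ k ∈ s, f k) ⬝ᵥ v = ∑ k ∈ s, f k ⬝ᵥ v := by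
  simp only [dotProduct, Finset.sum_apply, Finset.sum_mul]
  exact Finset.sum_comm


lemma dot_self_nonneg (v : Fin n → ℝ) : 0 ≤ v ⬝ᵥ v :=
  Finset.sum_nonneg fun i _ => mul_self_nonneg _


lemma eq_zero_of_dot_self (v : Fin n → ℝ) (h : v ⬝ᵥ v ≤ 0) : v = 0 := by
  funext i
  have h0 : ∀ j ∈ Finset.univ, (0:ℝ) ≤ v j * v j := fun j _ => mul_self_nonneg _
  have := (Finset.sum_eq_zero_iff_of_nonneg h0).1
    (le_antisymm h (dot_self_nonneg v)) i (Finset.mem_univ i)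
  have := mul_self_eq_zero.1 this
  simpa using this


/-- dot with a fixed vector, as a linear map. -/
noncomputable def dotlin (v : Fin n → ℝ) : (Fin n → ℝ) →ₗ[ℝ] ℝ where
  toFun y := v ⬝ᵥ y
  map_add' a b := dotProduct_add v a b
  map_smul' c a := by simp [dotProduct_smul]


lemma dotlin_apply (v y : Fin n → ℝ) : dotlin v y = v ⬝ᵥ y := rfl

lemma continuous_dot (v : Fin n → ℝ) : Continuous fun y : Fin n → ℝ => v ⬝ᵥ y :=
  (dotlin v).continuous_of_finiteDimensional



lemma d_pos (x : Fin n → ℝ) (hx : StrictMono x) {i j : Fin n} (h : i < j) : 0 < x j - x i :=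
  sub_pos.2 (hx h)


lemma aV_apply_of_lt (x : Fin n → ℝ) (k : Fin (n - 2)) (j : Fin n) (hj : j.1 < k.1) :
    aV x k j = 0 := by
  simp only [aV, Pi.add_apply, Pi.single_apply]
  split_ifs <;> simp_all [Fin.ext_iff] <;> omega


lemma aV_apply_self (x : Fin n → ℝ) (k : Fin (n - 2)) :
    aV x k ⟨k.1, by omega⟩ = 1 / (x ⟨k.1 + 1, by omega⟩ - x ⟨k.1, by omega⟩) := by
  simp only [aV, Pi.add_apply, Pi.single_apply]
  split_ifs <;> simp_all [Fin.ext_iff] <;> omega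


lemma lin_indep (x : Fin n → ℝ) (hx : StrictMono x) (c : Fin (n - 2) → ℝ)
    (h : ∑ k, c k • aV x k = 0) : c = 0 := by
  have key : ∀ N : ℕ, ∀ k : Fin (n - 2), k.1 = N → c k = 0 := by
    intro N
    induction N using Nat.strong_induction_on with
    | _ N IH =>
      intro k hk
      have hcoord := congrFun h ⟨k.1, by omega⟩
      rw [Finset.sum_apply] at hcoord
      simp only [Pi.smul_apply, smul_eq_mul, Pi.zero_apply] at hcoord
      rw [Finset.sum_eq_single k] at hcoord
      · rw [aV_apply_self] at hcoord
        have hd : 0 < x ⟨k.1 + 1, by omega⟩ - x ⟨k.1, by omega⟩ :=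
          d_pos x hx (by simp [Fin.lt_def])
        have : (1:ℝ) / (x ⟨k.1 + 1, by omega⟩ - x ⟨k.1, by omega⟩) ≠ 0 :=
          one_div_ne_zero (ne_of_gt hd)
        exact (mul_eq_zero.1 hcoord).resolve_right this
      · intro b _ hbk
        rcases lt_trichotomy b.1 k.1 with hlt | heq | hgt
        · rw [IH b.1 (by omega) b rfl, zero_mul]
        · exact absurd (Fin.ext heq) hbk
        · rw [aV_apply_of_lt x b ⟨k.1, by omega⟩ hgt, mul_zero]
      · intro hk'; exact absurd (Finset.mem_univ k) hk'
  funext k; exact key k.1 k rfl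



noncomputable def gram (x : Fin n → ℝ) (A : Finset (Fin (n - 2))) : Matrix A A ℝ :=
  fun j k => aV x j.1 ⬝ᵥ aV x k.1


lemma gram_isUnit (x : Fin n → ℝ) (hx : StrictMono x) (A : Finset (Fin (n - 2))) :
    IsUnit (gram x A).det := by
  classical
  rw [isUnit_iff_ne_zero]
  intro hdet
  obtain ⟨v, hv, hmv⟩ := Matrix.exists_mulVec_eq_zero_iff.2 hdet
  set w : Fin n → ℝ := ∑ k : A, v k • aV x k.1 with hw
  have hdotw : ∀ k : A, aV x k.1 ⬝ᵥ w = (gram x A).mulVec v k := by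
    intro k
    rw [hw, dotProduct_comm, sum_dot]
    simp only [smul_dotProduct, smul_eq_mul, Matrix.mulVec, dotProduct, gram]
    apply Finset.sum_congr rfl
    intro j _
    rw [Finset.sum_mul]
    exact Finset.sum_congr rfl fun i _ => by
      simp only [Pi.smul_apply, smul_eq_mul]; ring
  have hww : w ⬝ᵥ w = 0 := by
    conv_lhs => rw [hw]
    rw [sum_dot]
    have : ∀ k : A, (v k • aV x k.1) ⬝ᵥ w = v k * ((gram x A).mulVec v k) := by
      intro k; rw [smul_dotProduct, hdotw k]; rfl
    rw [Finset.sum_congr rfl (fun k _ => this k)]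
    simp [hmv]
  have hw0 : w = 0 := eq_zero_of_dot_self w (le_of_eq hww)
  -- extend v by zero
  set c : Fin (n - 2) → ℝ := fun k => if h : k ∈ A then v ⟨k, h⟩ else 0 with hc
  have hsum : ∑ k, c k • aV x k = 0 := by
    rw [show (∑ k, c k • aV x k) = ∑ k ∈ A, c k • aV x k from ?_, ← Finset.sum_attach A
      (fun k => c k • aV x k)]
    · rw [← hw0, hw]
      apply Finset.sum_congr rfl
      intro k _
      simp [hc, k.2]
    · symm
      apply Finset.sum_subset (Finset.subset_univ A)
      intro k _ hk
      simp [hc, hk]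
  have := lin_indep x hx c hsum
  apply hv
  funext k
  have := congrFun this k.1
  simpa [hc, k.2] using this


noncomputable def bV (x : Fin n → ℝ) (A : Finset (Fin (n - 2))) (k : A) : Fin n → ℝ :=
  ∑ j : A, (gram x A)⁻¹ k j • aV x j.1


lemma aV_dot_bV (x : Fin n → ℝ) (hx : StrictMono x) (A : Finset (Fin (n - 2))) (l k : A) :
    aV x l.1 ⬝ᵥ bV x A k = if k = l then 1 else 0 := by
  rw [bV, dotProduct_comm, sum_dot]
  have : ∀ j : A, ((gram x A)⁻¹ k j • aV x j.1) ⬝ᵥ aV x l.1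
      = (gram x A)⁻¹ k j * gram x A j l := by
    intro j; rw [smul_dotProduct]; rfl
  rw [Finset.sum_congr rfl fun j _ => this j]
  have := Matrix.nonsing_inv_mul (gram x A) (gram_isUnit x hx A)
  have h2 := congrFun (congrFun this k) l
  simpa [Matrix.mul_apply, Matrix.one_apply] using h2


/-- Key: `∑_{k∈A} (bV k ⬝ᵥ v) * (aV l ⬝ᵥ aV k) = aV l ⬝ᵥ v` for `l ∈ A`. -/
lemma proj_dot (x : Fin n → ℝ) (hx : StrictMono x) (A : Finset (Fin (n - 2))) (l : A)
    (v : Fin n → ℝ) :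
    ∑ k : A, (bV x A k ⬝ᵥ v) * (aV x l.1 ⬝ᵥ aV x k.1) = aV x l.1 ⬝ᵥ v := by
  have hb : ∀ k : A, bV x A k ⬝ᵥ v = ∑ j : A, (gram x A)⁻¹ k j * (aV x j.1 ⬝ᵥ v) := by
    intro k
    rw [bV, sum_dot]
    exact Finset.sum_congr rfl fun j _ => by rw [smul_dotProduct]; rfl
  calc ∑ k : A, (bV x A k ⬝ᵥ v) * (aV x l.1 ⬝ᵥ aV x k.1)
      = ∑ k : A, ∑ j : A, gram x A l k * (gram x A)⁻¹ k j * (aV x j.1 ⬝ᵥ v) := by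
        apply Finset.sum_congr rfl; intro k _
        rw [hb k, Finset.sum_mul]
        apply Finset.sum_congr rfl; intro j _
        have hg : gram x A l k = aV x l.1 ⬝ᵥ aV x k.1 := rfl
        rw [← hg]; ring
    _ = ∑ j : A, (gram x A * (gram x A)⁻¹) l j * (aV x j.1 ⬝ᵥ v) := by
        rw [Finset.sum_comm]
        apply Finset.sum_congr rfl; intro j _
        rw [Matrix.mul_apply, Finset.sum_mul]
    _ = aV x l.1 ⬝ᵥ v := by
        rw [Matrix.mul_nonsing_inv (gram x A) (gram_isUnit x hx A)]
        simp [Matrix.one_apply]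



lemma dot_sum_smul (u : Fin n → ℝ) {ι : Type*} (s : Finset ι) (c : ι → ℝ)
    (f : ι → Fin n → ℝ) :
    u ⬝ᵥ (∑ k ∈ s, c k • f k) = ∑ k ∈ s, c k * (u ⬝ᵥ f k) := by
  rw [dotProduct_comm, sum_dot]
  exact Finset.sum_congr rfl fun k _ => by
    rw [smul_dotProduct, smul_eq_mul, dotProduct_comm]


/-- The linear projection onto `{θ | aV k ⬝ᵥ θ = 0, k ∈ A}`. -/
noncomputable def Lmap (x : Fin n → ℝ) (A : Finset (Fin (n - 2))) :
    (Fin n → ℝ) →ₗ[ℝ] (Fin n → ℝ) :=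
  LinearMap.id - ∑ k : A, (dotlin (bV x A k)).smulRight (aV x k.1)


lemma Lmap_apply (x : Fin n → ℝ) (A : Finset (Fin (n - 2))) (y : Fin n → ℝ) :
    Lmap x A y = y - ∑ k : A, (bV x A k ⬝ᵥ y) • aV x k.1 := by
  simp only [Lmap, LinearMap.sub_apply, LinearMap.id_apply, LinearMap.coe_sum,
    Finset.sum_apply, LinearMap.smulRight_apply, dotlin_apply]


lemma aV_dot_Lmap (x : Fin n → ℝ) (hx : StrictMono x) (A : Finset (Fin (n - 2)))
    (l : A) (y : Fin n → ℝ) : aV x l.1 ⬝ᵥ Lmap x A y = 0 := by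
  rw [Lmap_apply, dotProduct_sub, dot_sum_smul, proj_dot x hx, sub_self]


lemma sub_Lmap (x : Fin n → ℝ) (A : Finset (Fin (n - 2))) (y : Fin n → ℝ) :
    y - Lmap x A y = ∑ k : A, (bV x A k ⬝ᵥ y) • aV x k.1 := by
  rw [Lmap_apply, sub_sub_cancel]


lemma Lmap_trace (x : Fin n → ℝ) (hx : StrictMono x) (A : Finset (Fin (n - 2))) :
    ∑ i, Lmap x A (Pi.single i 1) i = (n : ℝ) - A.card := by
  have h1 : ∀ i : Fin n, Lmap x A (Pi.single i 1) i
      = 1 - ∑ k : A, bV x A k i * aV x k.1 i := by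
    intro i
    rw [Lmap_apply]
    simp only [Pi.sub_apply, Finset.sum_apply, Pi.smul_apply, smul_eq_mul,
      Pi.single_eq_same, dotProduct_single, mul_one]
  rw [Finset.sum_congr rfl fun i _ => h1 i, Finset.sum_sub_distrib]
  rw [Finset.sum_comm]
  have h2 : ∀ k : A, ∑ i, bV x A k i * aV x k.1 i = 1 := by
    intro k
    have := aV_dot_bV x hx A k k
    rw [if_pos rfl] at this
    rw [← this, dotProduct_comm]
    rfl
  rw [Finset.sum_congr rfl fun k _ => h2 k]
  simp [Finset.card_univ]


/-- The halfspace description of the constraint cone. -/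
def Hse (x : Fin n → ℝ) : Set (Fin n → ℝ) := {θ | ∀ k : Fin (n - 2), 0 ≤ aV x k ⬝ᵥ θ}


lemma mem_H_iff (x : Fin n → ℝ) (hx : StrictMono x) (θ : Fin n → ℝ) :
    θ ∈ Hse x ↔ ∀ i : ℕ, ∀ h : i + 2 < n,
      (θ ⟨i + 1, Nat.lt_of_succ_lt h⟩ - θ ⟨i, Nat.lt_of_succ_lt (Nat.lt_of_succ_lt h)⟩) / (x ⟨i + 1, Nat.lt_of_succ_lt h⟩ - x ⟨i, Nat.lt_of_succ_lt (Nat.lt_of_succ_lt h)⟩)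
        ≤ (θ ⟨i + 2, h⟩ - θ ⟨i + 1, Nat.lt_of_succ_lt h⟩) / (x ⟨i + 2, h⟩ - x ⟨i + 1, Nat.lt_of_succ_lt h⟩) := by
  constructor
  · intro H i h
    have := H ⟨i, by omega⟩
    rw [aV_dot] at this
    exact sub_nonneg.1 this
  · intro H k
    rw [aV_dot]
    exact sub_nonneg.2 (H k.1 (by omega))


lemma strict_iff (x : Fin n → ℝ) (θ : Fin n → ℝ) (i : ℕ) (h : i + 2 < n) :
    ((θ ⟨i + 1, Nat.lt_of_succ_lt h⟩ - θ ⟨i, Nat.lt_of_succ_lt (Nat.lt_of_succ_lt h)⟩) / (x ⟨i + 1, Nat.lt_of_succ_lt h⟩ - x ⟨i, Nat.lt_of_succ_lt (Nat.lt_of_succ_lt h)⟩)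
        < (θ ⟨i + 2, h⟩ - θ ⟨i + 1, Nat.lt_of_succ_lt h⟩) / (x ⟨i + 2, h⟩ - x ⟨i + 1, Nat.lt_of_succ_lt h⟩))
      ↔ 0 < aV x ⟨i, by omega⟩ ⬝ᵥ θ := by
  rw [aV_dot]
  exact (sub_pos).symm



lemma exists_pos_t {ι : Type*} [Fintype ι] (f g : ι → ℝ) (hf : ∀ i, 0 ≤ f i)
    (h : ∀ i, f i = 0 → 0 ≤ g i) :
    ∃ t : ℝ, 0 < t ∧ ∀ i, 0 ≤ f i + t * g i := by
  classical
  set T : ι → ℝ := fun i => if g i < 0 then f i / (-g i) else 1 with hT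
  have hTif : ∀ i, T i = if g i < 0 then f i / -g i else 1 := fun i => rfl
  have hTpos : ∀ i, 0 < T i := by
    intro i
    rw [hTif i]
    by_cases hg : g i < 0
    · rw [if_pos hg]
      have hfi : 0 < f i := by
        rcases lt_or_eq_of_le (hf i) with h' | h'
        · exact h'
        · exact absurd (h i h'.symm) (not_le.2 hg)
      exact div_pos hfi (by linarith)
    · rw [if_neg hg]; exact one_pos
  by_cases hne : Nonempty ι
  · obtain ⟨i0, -, hmin⟩ := Finset.exists_min_image Finset.univ T ⟨hne.some, Finset.mem_univ _⟩
    refine ⟨T i0, hTpos i0, ?_⟩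
    intro i
    by_cases hg : g i < 0
    · have hle : T i0 ≤ T i := hmin i (Finset.mem_univ i)
      rw [hTif i, if_pos hg] at hle
      have hng : 0 < -g i := by linarith
      have h2 := (le_div_iff₀ hng).1 hle
      rw [mul_neg] at h2
      linarith
    · push_neg at hg
      have := mul_nonneg (le_of_lt (hTpos i0)) hg
      linarith [hf i]
  · exact ⟨1, one_pos, fun i => absurd ⟨i⟩ hne⟩


lemma feasible_dir (x : Fin n → ℝ) {θ : Fin n → ℝ} (hθ : θ ∈ Hse x) (d : Fin n → ℝ)
    (hd : ∀ k, aV x k ⬝ᵥ θ = 0 → 0 ≤ aV x k ⬝ᵥ d) :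
    ∃ t : ℝ, 0 < t ∧ θ + t • d ∈ Hse x := by
  obtain ⟨t, ht, h⟩ := exists_pos_t (fun k => aV x k ⬝ᵥ θ) (fun k => aV x k ⬝ᵥ d) hθ
    (fun k hk => hd k hk)
  refine ⟨t, ht, fun k => ?_⟩
  rw [dotProduct_add, dotProduct_smul, smul_eq_mul]
  exact h k


lemma VI (x : Fin n → ℝ) (y θh : Fin n → ℝ) (hθh : θh ∈ Hse x)
    (hmin : ∀ θ ∈ Hse x, ∑ j, (y j - θh j) ^ 2 ≤ ∑ j, (y j - θ j) ^ 2)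
    {θ : Fin n → ℝ} (hθ : θ ∈ Hse x) : (y - θh) ⬝ᵥ (θ - θh) ≤ 0 := by
  set c : ℝ := (y - θh) ⬝ᵥ (θ - θh) with hc
  set q : ℝ := (θ - θh) ⬝ᵥ (θ - θh) with hq
  have hcs : c = ∑ j, (y j - θh j) * (θ j - θh j) := by
    rw [hc]; simp [dotProduct]
  have hqs : q = ∑ j, (θ j - θh j) * (θ j - θh j) := by
    rw [hq]; simp [dotProduct]
  have key : ∀ t : ℝ, 0 ≤ t → t ≤ 1 → 0 ≤ t * (t * q - 2 * c) := by
    intro t ht0 ht1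
    have hmem : θh + t • (θ - θh) ∈ Hse x := by
      intro k
      have h1 := hθh k; have h2 := hθ k
      rw [dotProduct_add, dotProduct_smul, smul_eq_mul, dotProduct_sub]
      nlinarith
    have hm := hmin _ hmem
    have expand : ∑ j, (y j - (θh + t • (θ - θh)) j) ^ 2
        = ∑ j, (y j - θh j) ^ 2 - 2 * t * c + t ^ 2 * q := by
      rw [hcs, hqs, Finset.mul_sum, Finset.mul_sum, ← Finset.sum_sub_distrib,
        ← Finset.sum_add_distrib]
      apply Finset.sum_congr rfl
      intro j _
      simp only [Pi.add_apply, Pi.smul_apply, Pi.sub_apply, smul_eq_mul]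
      ring
    rw [expand] at hm
    nlinarith
  by_contra hcpos
  push_neg at hcpos
  have hqne : q ≠ 0 := by
    intro h0
    have : θ - θh = 0 := eq_zero_of_dot_self _ (le_of_eq h0)
    rw [hc, this, dotProduct_zero] at hcpos
    exact lt_irrefl 0 hcpos
  have hqpos : 0 < q := lt_of_le_of_ne (dot_self_nonneg _) (Ne.symm hqne)
  set t := min 1 (c / q) with htdef
  have ht0 : 0 < t := lt_min one_pos (div_pos hcpos hqpos)
  have h := key t (le_of_lt ht0) (min_le_left _ _)
  have htq : t * q ≤ c := by
    have h1 : t ≤ c / q := min_le_right 1 (c / q)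
    calc t * q ≤ (c / q) * q := by nlinarith
      _ = c := div_mul_cancel₀ c (ne_of_gt hqpos)
  have hneg : t * (t * q - 2 * c) < 0 :=
    mul_neg_of_pos_of_neg ht0 (by linarith)
  linarith



lemma bV_dot_active (x : Fin n → ℝ) (A : Finset (Fin (n - 2))) (k : A) {θh : Fin n → ℝ}
    (hact : ∀ j : A, aV x j.1 ⬝ᵥ θh = 0) : bV x A k ⬝ᵥ θh = 0 := by
  rw [bV, sum_dot]
  apply Finset.sum_eq_zero
  intro j _
  rw [smul_dotProduct, hact j, smul_eq_mul, mul_zero]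


lemma KKT (x : Fin n → ℝ) (hx : StrictMono x) (y θh : Fin n → ℝ) (hθh : θh ∈ Hse x)
    (hmin : ∀ θ ∈ Hse x, ∑ j, (y j - θh j) ^ 2 ≤ ∑ j, (y j - θ j) ^ 2)
    (A : Finset (Fin (n - 2))) (hA : ∀ k, k ∈ A ↔ aV x k ⬝ᵥ θh = 0) :
    θh = Lmap x A y ∧ ∀ k : A, bV x A k ⬝ᵥ y ≤ 0 := by
  have hact : ∀ j : A, aV x j.1 ⬝ᵥ θh = 0 := fun j => (hA j.1).1 j.2
  have hbθ : ∀ k : A, bV x A k ⬝ᵥ θh = 0 := fun k => bV_dot_active x A k hact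
  have hby : ∀ k : A, bV x A k ⬝ᵥ y = bV x A k ⬝ᵥ (y - θh) := by
    intro k; rw [dotProduct_sub, hbθ k, sub_zero]
  set v : Fin n → ℝ := y - θh with hv
  set p : Fin n → ℝ := ∑ k : A, (bV x A k ⬝ᵥ v) • aV x k.1 with hp
  set q : Fin n → ℝ := v - p with hqdef
  have hq : ∀ l : A, aV x l.1 ⬝ᵥ q = 0 := by
    intro l
    rw [hqdef, dotProduct_sub, hp, dot_sum_smul, proj_dot x hx, sub_self]
  have hq0 : q = 0 := by
    obtain ⟨t, ht, hmem⟩ := feasible_dir x hθh q (fun k hk => le_of_eq (hq ⟨k, (hA k).2 hk⟩).symm)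
    have hvi := VI x y θh hθh hmin hmem
    have : θh + t • q - θh = t • q := by abel
    rw [this, ← hv, dotProduct_smul, smul_eq_mul] at hvi
    have hvq : v ⬝ᵥ q ≤ 0 := nonpos_of_mul_nonpos_right hvi ht
    have hpq : p ⬝ᵥ q = 0 := by
      rw [hp, sum_dot]
      apply Finset.sum_eq_zero
      intro k _
      rw [smul_dotProduct, hq k, smul_eq_mul, mul_zero]
    have hvpq : v ⬝ᵥ q = p ⬝ᵥ q + q ⬝ᵥ q := by
      rw [← add_dotProduct, hp]
      congr 1
      rw [hqdef]; abel
    apply eq_zero_of_dot_self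
    rw [hvpq, hpq, zero_add] at hvq
    exact hvq
  constructor
  · rw [Lmap_apply]
    have : p = ∑ k : A, (bV x A k ⬝ᵥ y) • aV x k.1 := by
      rw [hp]
      exact Finset.sum_congr rfl fun k _ => by rw [hby k]
    rw [← this]
    have := sub_eq_zero.1 hq0
    rw [hv] at this
    -- this : y - θh = p
    rw [← this]
    abel
  · intro k
    obtain ⟨t, ht, hmem⟩ := feasible_dir x hθh (bV x A k) (fun l hl => by
      rw [aV_dot_bV x hx A ⟨l, (hA l).2 hl⟩ k]
      split_ifs <;> norm_num)
    have hvi := VI x y θh hθh hmin hmem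
    have : θh + t • bV x A k - θh = t • bV x A k := by abel
    rw [this, dotProduct_smul, smul_eq_mul] at hvi
    have := nonpos_of_mul_nonpos_right hvi ht
    rw [hby k, dotProduct_comm]
    exact this


lemma identify (x : Fin n → ℝ) (hx : StrictMono x) (A : Finset (Fin (n - 2)))
    (y' : Fin n → ℝ) (h1 : ∀ k : A, bV x A k ⬝ᵥ y' ≤ 0)
    (h2 : ∀ k : Fin (n - 2), k ∉ A → 0 ≤ aV x k ⬝ᵥ Lmap x A y') :
    Lmap x A y' ∈ Hse x ∧
      ∀ θ ∈ Hse x, ∑ j, (y' j - Lmap x A y' j) ^ 2 ≤ ∑ j, (y' j - θ j) ^ 2 := by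
  classical
  have hmem : Lmap x A y' ∈ Hse x := by
    intro k
    by_cases hk : k ∈ A
    · exact le_of_eq (aV_dot_Lmap x hx A ⟨k, hk⟩ y').symm
    · exact h2 k hk
  refine ⟨hmem, ?_⟩
  intro θ hθ
  set L : Fin n → ℝ := Lmap x A y' with hL
  have hdot : 0 ≤ (y' - L) ⬝ᵥ (L - θ) := by
    rw [hL, sub_Lmap, sum_dot]
    apply Finset.sum_nonneg
    intro k _
    rw [smul_dotProduct, smul_eq_mul, dotProduct_sub, aV_dot_Lmap x hx A k y', zero_sub,
      mul_neg, ← neg_mul]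
    exact mul_nonneg (neg_nonneg.2 (h1 k)) (hθ k.1)
  have expand : ∑ j, (y' j - θ j) ^ 2
      = ∑ j, (y' j - L j) ^ 2 + 2 * ((y' - L) ⬝ᵥ (L - θ)) + ∑ j, (L j - θ j) ^ 2 := by
    have hd : (y' - L) ⬝ᵥ (L - θ) = ∑ j, (y' j - L j) * (L j - θ j) := by
      simp [dotProduct]
    rw [hd, Finset.mul_sum, ← Finset.sum_add_distrib, ← Finset.sum_add_distrib]
    exact Finset.sum_congr rfl fun j _ => by ring
  have hsq : 0 ≤ ∑ j, (L j - θ j) ^ 2 := Finset.sum_nonneg fun j _ => sq_nonneg _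
  rw [expand]
  linarith


lemma uniq (x : Fin n → ℝ) (y θ1 θ2 : Fin n → ℝ) (h1 : θ1 ∈ Hse x) (h2 : θ2 ∈ Hse x)
    (m1 : ∀ θ ∈ Hse x, ∑ j, (y j - θ1 j) ^ 2 ≤ ∑ j, (y j - θ j) ^ 2)
    (m2 : ∀ θ ∈ Hse x, ∑ j, (y j - θ2 j) ^ 2 ≤ ∑ j, (y j - θ j) ^ 2) : θ1 = θ2 := by
  have hmid : (1 / 2 : ℝ) • (θ1 + θ2) ∈ Hse x := by
    intro k
    rw [dotProduct_smul, dotProduct_add, smul_eq_mul]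
    have := h1 k; have := h2 k
    linarith
  have expand : ∑ j, (y j - ((1 / 2 : ℝ) • (θ1 + θ2)) j) ^ 2
      = (∑ j, (y j - θ1 j) ^ 2) / 2 + (∑ j, (y j - θ2 j) ^ 2) / 2
        - (∑ j, (θ1 j - θ2 j) ^ 2) / 4 := by
    rw [Finset.sum_div, Finset.sum_div, Finset.sum_div, ← Finset.sum_add_distrib,
      ← Finset.sum_sub_distrib]
    apply Finset.sum_congr rfl
    intro j _
    simp only [Pi.smul_apply, Pi.add_apply, smul_eq_mul]
    ring
  have e1 := m1 _ hmid
  have e2 := m2 θ1 h1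
  have e3 := m1 θ2 h2
  rw [expand] at e1
  have hs : ∑ j, (θ1 j - θ2 j) ^ 2 ≤ 0 := by linarith
  have hz : ∀ j ∈ Finset.univ, (θ1 j - θ2 j) ^ 2 = 0 :=
    (Finset.sum_eq_zero_iff_of_nonneg (fun j _ => sq_nonneg _)).1
      (le_antisymm hs (Finset.sum_nonneg fun j _ => sq_nonneg _))
  funext j
  have := pow_eq_zero_iff (n := 2) (by norm_num) |>.1 (hz j (Finset.mem_univ j))
  linarith [sub_eq_zero.1 this]



end CRaux

open CRaux in
/-- For the metric projection `θ̂` onto the univariate convex regression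
cone (nondecreasing consecutive slopes w.r.t. strictly increasing design points `x`),
for almost every `y` the map `θ̂` is differentiable at `y` with divergence `s + 2`, where
`s` is the number of strict changes of slope of the fit `θ̂(y)`. -/
theorem divergence_univariate_convex_regression {n : ℕ} (hn : 2 ≤ n)
    (x : Fin n → ℝ) (hx : StrictMono x)
    (C : Set (Fin n → ℝ))
    (hC : C = {θ | ∀ i : ℕ, ∀ h : i + 2 < n,
      (θ ⟨i + 1, by omega⟩ - θ ⟨i, by omega⟩) / (x ⟨i + 1, by omega⟩ - x ⟨i, by omega⟩)
        ≤ (θ ⟨i + 2, h⟩ - θ ⟨i + 1, by omega⟩) / (x ⟨i + 2, h⟩ - x ⟨i + 1, by omega⟩)})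
    (θhat : (Fin n → ℝ) → (Fin n → ℝ))
    (hproj : ∀ y, θhat y ∈ C ∧ ∀ θ ∈ C, ∑ j, (y j - θhat y j) ^ 2 ≤ ∑ j, (y j - θ j) ^ 2) :
    ∀ᵐ y ∂(volume : Measure (Fin n → ℝ)), DifferentiableAt ℝ θhat y ∧
      divg θhat y =
        (Set.ncard {i : ℕ | ∃ h : i + 2 < n,
          (θhat y ⟨i + 1, by omega⟩ - θhat y ⟨i, by omega⟩)
              / (x ⟨i + 1, by omega⟩ - x ⟨i, by omega⟩)
            < (θhat y ⟨i + 2, h⟩ - θhat y ⟨i + 1, by omega⟩)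
              / (x ⟨i + 2, h⟩ - x ⟨i + 1, by omega⟩)} : ℝ) + 2 := by
  classical
  -- replace `C` by the halfspace description
  have hH : C = Hse x := by
    rw [hC]
    ext θ
    exact (mem_H_iff x hx θ).symm
  rw [hH] at hproj
  -- the bad set: a finite union of hyperplanes
  set Bad : Set (Fin n → ℝ) :=
    ⋃ (A : Finset (Fin (n - 2))), ⋃ (k : A), {y | bV x A k ⬝ᵥ y = 0} with hBadDef
  have hBadNull : volume Bad = 0 := by
    rw [hBadDef]
    refine measure_iUnion_null fun A => measure_iUnion_null fun k => ?_
    have hker : {y : Fin n → ℝ | bV x A k ⬝ᵥ y = 0}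
        = (LinearMap.ker (dotlin (bV x A k)) : Set (Fin n → ℝ)) := by
      ext y
      simp [LinearMap.mem_ker, dotlin_apply]
    have hne : (LinearMap.ker (dotlin (bV x A k)) : Submodule ℝ (Fin n → ℝ)) ≠ ⊤ := by
      intro htop
      have h1 : dotlin (bV x A k) (aV x k.1) = 0 := by
        have : aV x k.1 ∈ LinearMap.ker (dotlin (bV x A k)) := by rw [htop]; trivial
        exact LinearMap.mem_ker.1 this
      rw [dotlin_apply, dotProduct_comm] at h1
      have h2 := aV_dot_bV x hx A k k
      rw [if_pos rfl, h1] at h2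
      exact one_ne_zero h2.symm
    rw [hker]
    exact Measure.addHaar_submodule _ _ hne
  rw [MeasureTheory.ae_iff]
  refine measure_mono_null (fun y hy => ?_) hBadNull
  by_contra hyB
  apply hy
  clear hy
  -- `y` avoids every hyperplane
  have hBgood : ∀ (A : Finset (Fin (n - 2))) (k : A), bV x A k ⬝ᵥ y ≠ 0 := by
    intro A k h0
    exact hyB (Set.mem_iUnion.2 ⟨A, Set.mem_iUnion.2 ⟨k, h0⟩⟩)
  -- the active set
  set A : Finset (Fin (n - 2)) :=
    Finset.univ.filter (fun k => aV x k ⬝ᵥ θhat y = 0) with hAdef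
  have hA : ∀ k, k ∈ A ↔ aV x k ⬝ᵥ θhat y = 0 := by
    intro k; rw [hAdef]; simp
  have hmem := (hproj y).1
  have hmin := (hproj y).2
  obtain ⟨hKKT1, hKKT2⟩ := KKT x hx y (θhat y) hmem hmin A hA
  have hstrict : ∀ k : A, bV x A k ⬝ᵥ y < 0 :=
    fun k => lt_of_le_of_ne (hKKT2 k) (hBgood A k)
  -- the open neighborhood on which `θhat` agrees with `Lmap x A`
  set U : Set (Fin n → ℝ) :=
    ⋂ k : Fin (n - 2), (if hk : k ∈ A then {y' | bV x A ⟨k, hk⟩ ⬝ᵥ y' < 0}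
      else {y' | 0 < aV x k ⬝ᵥ Lmap x A y'}) with hUdef
  have hLcont : Continuous (Lmap x A) := (Lmap x A).continuous_of_finiteDimensional
  have hUopen : IsOpen U := by
    rw [hUdef]
    refine isOpen_iInter_of_finite fun k => ?_
    by_cases hk : k ∈ A
    · rw [dif_pos hk]
      exact isOpen_lt (continuous_dot _) continuous_const
    · rw [dif_neg hk]
      exact isOpen_lt continuous_const ((continuous_dot _).comp hLcont)
  have hyU : y ∈ U := by
    rw [hUdef]
    refine Set.mem_iInter.2 fun k => ?_
    by_cases hk : k ∈ A
    · rw [dif_pos hk]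
      exact hstrict ⟨k, hk⟩
    · rw [dif_neg hk]
      show 0 < aV x k ⬝ᵥ Lmap x A y
      rw [← hKKT1]
      exact lt_of_le_of_ne (hmem k) (Ne.symm fun h0 => hk ((hA k).2 h0))
  have hloc : ∀ y' ∈ U, θhat y' = Lmap x A y' := by
    intro y' hy'
    rw [hUdef, Set.mem_iInter] at hy'
    have h1 : ∀ k : A, bV x A k ⬝ᵥ y' ≤ 0 := by
      intro k
      have := hy' k.1
      rw [dif_pos k.2] at this
      exact le_of_lt this
    have h2 : ∀ k : Fin (n - 2), k ∉ A → 0 ≤ aV x k ⬝ᵥ Lmap x A y' := by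
      intro k hk
      have := hy' k
      rw [dif_neg hk] at this
      exact le_of_lt this
    obtain ⟨hLmem, hLmin⟩ := identify x hx A y' h1 h2
    exact uniq x y' (θhat y') (Lmap x A y') (hproj y').1 hLmem (hproj y').2 hLmin
  -- local linearity
  set Lclm : (Fin n → ℝ) →L[ℝ] (Fin n → ℝ) :=
    LinearMap.toContinuousLinearMap (Lmap x A) with hLclm
  have hLclm_apply : ∀ z, Lclm z = Lmap x A z := fun z => rfl
  have hev : θhat =ᶠ[nhds y] ⇑Lclm :=
    Filter.eventuallyEq_of_mem (hUopen.mem_nhds hyU)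
      (fun y' hy' => by rw [hloc y' hy', hLclm_apply])
  have hdiff : DifferentiableAt ℝ θhat y :=
    (Lclm.differentiableAt).congr_of_eventuallyEq hev
  have hfd : fderiv ℝ θhat y = Lclm := by
    rw [hev.fderiv_eq, Lclm.fderiv]
  refine ⟨hdiff, ?_⟩
  -- divergence computation
  have hdivg : divg θhat y = (n : ℝ) - A.card := by
    rw [divg, hfd]
    have : ∀ i, Lclm (Pi.single i 1) i = Lmap x A (Pi.single i 1) i :=
      fun i => by rw [hLclm_apply]
    rw [Finset.sum_congr rfl fun i _ => this i]
    exact Lmap_trace x hx A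
  -- counting the strict slope changes
  have hS : {i : ℕ | ∃ h : i + 2 < n,
      (θhat y ⟨i + 1, by omega⟩ - θhat y ⟨i, by omega⟩)
          / (x ⟨i + 1, by omega⟩ - x ⟨i, by omega⟩)
        < (θhat y ⟨i + 2, h⟩ - θhat y ⟨i + 1, by omega⟩)
          / (x ⟨i + 2, h⟩ - x ⟨i + 1, by omega⟩)}
      = Fin.val '' (↑(Aᶜ) : Set (Fin (n - 2))) := by
    ext i
    simp only [Set.mem_setOf_eq, Set.mem_image, Finset.coe_compl, Set.mem_compl_iff,
      Finset.mem_coe]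
    constructor
    · rintro ⟨h, hlt⟩
      refine ⟨⟨i, by omega⟩, ?_, rfl⟩
      intro hmemA
      have h0 := (hA _).1 hmemA
      have := (strict_iff x (θhat y) i h).1 hlt
      rw [h0] at this
      exact lt_irrefl 0 this
    · rintro ⟨k, hk, rfl⟩
      have hklt : k.1 + 2 < n := by have := k.2; omega
      refine ⟨hklt, ?_⟩
      have hne : aV x k ⬝ᵥ θhat y ≠ 0 := fun h0 => hk ((hA k).2 h0)
      have hpos : 0 < aV x k ⬝ᵥ θhat y := lt_of_le_of_ne (hmem k) (Ne.symm hne)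
      have hkk : (⟨k.1, by omega⟩ : Fin (n - 2)) = k := Fin.ext rfl
      exact (strict_iff x (θhat y) k.1 hklt).2 (by rw [hkk]; exact hpos)
  have hcard_le : A.card ≤ n - 2 := by
    have := Finset.card_le_univ A
    simpa using this
  have hncard : Set.ncard {i : ℕ | ∃ h : i + 2 < n,
      (θhat y ⟨i + 1, by omega⟩ - θhat y ⟨i, by omega⟩)
          / (x ⟨i + 1, by omega⟩ - x ⟨i, by omega⟩)
        < (θhat y ⟨i + 2, h⟩ - θhat y ⟨i + 1, by omega⟩)
          / (x ⟨i + 2, h⟩ - x ⟨i + 1, by omega⟩)} = (n - 2) - A.card := by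
    rw [hS, Set.ncard_image_of_injective _ Fin.val_injective, Set.ncard_coe_finset,
      Finset.card_compl]
    simp
  rw [hdivg, hncard, Nat.cast_sub hcard_le, Nat.cast_sub hn]
  push_cast
  ring
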